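/- Let C ⊆ F_2^n be a linear code and W(k) ⊆ [n]^k a (1/2 + ε_0/2, ε)-parity sampler with ε_0, ε ∈ (0,1). Let C' = dsum_W(C). Suppose ỹ ∈ F_2^{W(k)} and z̃ ∈ F_2^n satisfy Δ(dsum_W(z̃), ỹ) < (1-ε)/4 + δ, and z ∈ C satisfies Δ(dsum_W(z), ỹ) < (1-ε)/4 - δ for some δ ≥ 0. Then either Δ(z, z̃) < (1-ε_0)/4 or Δ(z, complement of z̃) < (1-ε_0)/4. -/

import Mathlib

/-- The bias of a word `z ∈ F_2^n`. -/
noncomputable def bias (n : ℕ) (z : Fin n → ZMod 2) : ℝ :=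
  |(∑ i, (-1 : ℝ) ^ (z i).val) / n|

/-- The direct sum lifting. -/
def dsum {n k : ℕ} (W : Finset (Fin k → Fin n)) (z : Fin n → ZMod 2) :
    {w // w ∈ W} → ZMod 2 :=
  fun w => ∑ i, z (w.1 i)

/-- Bias of a lifted word. -/
noncomputable def biasW {n k : ℕ} (W : Finset (Fin k → Fin n))
    (y : {w // w ∈ W} → ZMod 2) : ℝ :=
  |(∑ w : {w // w ∈ W}, (-1 : ℝ) ^ (y w).val) / W.card|

/-- Normalized Hamming distance on `F_2^n`. -/
noncomputable def hdist {n : ℕ} (x y : Fin n → ZMod 2) : ℝ :=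
  ((Finset.univ.filter fun i => x i ≠ y i).card : ℝ) / n

/-- Normalized Hamming distance on `F_2^{W(k)}`. -/
noncomputable def hdistW {n k : ℕ} (W : Finset (Fin k → Fin n))
    (x y : {w // w ∈ W} → ZMod 2) : ℝ :=
  ((Finset.univ.filter fun w => x w ≠ y w).card : ℝ) / W.card

lemma zmod2_pow (a : ZMod 2) : (-1:ℝ)^a.val = 1 - 2 * (if a ≠ 0 then (1:ℝ) else 0) := by
  rcases (show ∀ b : ZMod 2, b = 0 ∨ b = 1 by decide) a with rfl | rfl <;> norm_num [ZMod.val_one]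

lemma sum_pow {α : Type*} [Fintype α] (z : α → ZMod 2) :
    ∑ i, (-1:ℝ)^(z i).val =
      (Fintype.card α : ℝ) - 2 * (Finset.univ.filter fun i => z i ≠ 0).card := by
  simp only [zmod2_pow, Finset.sum_sub_distrib, Finset.sum_const, Finset.card_univ, nsmul_eq_mul,
    mul_one, ← Finset.mul_sum, Finset.sum_boole]

lemma bias_formula {α : Type*} [Fintype α] (z : α → ZMod 2) (hc : 0 < Fintype.card α) :
    |(∑ i, (-1:ℝ)^(z i).val) / (Fintype.card α : ℝ)| =
      |1 - 2 * (((Finset.univ.filter fun i => z i ≠ 0).card : ℝ) / Fintype.card α)| := by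
  rw [sum_pow]
  congr 1
  have : (0:ℝ) < Fintype.card α := by exact_mod_cast hc
  field_simp

lemma tri_card {α : Type*} [Fintype α] (x y z : α → ZMod 2) :
    (Finset.univ.filter fun i => x i ≠ z i).card ≤
      (Finset.univ.filter fun i => x i ≠ y i).card +
      (Finset.univ.filter fun i => y i ≠ z i).card := by
  classical
  refine le_trans (Finset.card_le_card ?_) (Finset.card_union_le _ _)
  intro i hi
  simp only [Finset.mem_filter, Finset.mem_union, Finset.mem_univ, true_and] at *
  by_contra h
  push_neg at h
  exact hi (h.1.symm ▸ h.2)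

lemma zmod2_add_ne : ∀ a b : ZMod 2, a + b ≠ 0 ↔ a ≠ b := by decide

lemma zmod2_ne_add_one : ∀ a b : ZMod 2, (a ≠ b + 1) ↔ ¬ a ≠ b := by decide

/-- If `W(k)` is a `(1/2 + ε₀/2, ε)`-parity sampler, `yt` is within `(1-ε)/4 + δ` of the lift
of `zt` and `z ∈ C` has its lift within `(1-ε)/4 - δ` of `yt`, then `z` is within distance
`(1-ε₀)/4` of `zt` or of its complement. -/
theorem stmt_2 {n k : ℕ} (hn : 0 < n) (ε₀ ε δ : ℝ)
    (hε₀ : ε₀ ∈ Set.Ioo (0 : ℝ) 1) (hε : ε ∈ Set.Ioo (0 : ℝ) 1) (hδ : 0 ≤ δ)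
    (W : Finset (Fin k → Fin n)) (hW : W.Nonempty)
    (hps : ∀ u : Fin n → ZMod 2, bias n u ≤ 1/2 + ε₀/2 → biasW W (dsum W u) ≤ ε)
    (C : Submodule (ZMod 2) (Fin n → ZMod 2))
    (yt : {w // w ∈ W} → ZMod 2) (zt z : Fin n → ZMod 2) (hzC : z ∈ C)
    (h1 : hdistW W (dsum W zt) yt < (1 - ε)/4 + δ)
    (h2 : hdistW W (dsum W z) yt < (1 - ε)/4 - δ) :
    hdist z zt < (1 - ε₀)/4 ∨ hdist z (zt + fun _ => 1) < (1 - ε₀)/4 := by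
  obtain ⟨hε₀0, hε₀1⟩ := hε₀
  obtain ⟨hε0, hε1⟩ := hε
  have hNW : (0:ℝ) < W.card := by exact_mod_cast Finset.card_pos.mpr hW
  have hn' : (0:ℝ) < n := by exact_mod_cast hn
  by_contra hcon
  push_neg at hcon
  obtain ⟨hc1, hc2⟩ := hcon
  set m := (Finset.univ.filter fun i => z i ≠ zt i).card with hm
  have hdzt : hdist z zt = (m:ℝ) / n := rfl
  have hmn : m ≤ n := by
    simpa [hm] using Finset.card_filter_le (Finset.univ : Finset (Fin n)) _
  have hcomp : hdist z (zt + fun _ => 1) = ((n:ℝ) - m) / n := by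
    unfold hdist
    have heq : (Finset.univ.filter fun i => z i ≠ (zt + (fun _ => 1) : Fin n → ZMod 2) i) =
        Finset.univ.filter fun i => ¬ z i ≠ zt i := by
      apply Finset.filter_congr
      intro i _
      simpa using zmod2_ne_add_one (z i) (zt i)
    rw [heq, Finset.filter_not, Finset.card_sdiff_of_subset (Finset.filter_subset _ _),
      Finset.card_univ, Fintype.card_fin, ← hm, Nat.cast_sub hmn]
  rw [hdzt] at hc1
  rw [hcomp] at hc2
  have hsymm : hdistW W yt (dsum W zt) = hdistW W (dsum W zt) yt := by
    have hflip : (Finset.univ.filter fun w => yt w ≠ dsum W zt w) =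
        (Finset.univ.filter fun w => dsum W zt w ≠ yt w) := by
      apply Finset.filter_congr
      intro i _
      simp [ne_comm]
    unfold hdistW
    rw [hflip]
  have htri : hdistW W (dsum W z) (dsum W zt) < (1 - ε)/2 := by
    have ht := tri_card (dsum W z) yt (dsum W zt)
    have h3 : hdistW W (dsum W z) (dsum W zt) ≤
        hdistW W (dsum W z) yt + hdistW W yt (dsum W zt) := by
      unfold hdistW
      rw [← add_div, div_le_div_iff_of_pos_right hNW]
      exact_mod_cast ht
    rw [hsymm] at h3
    linarith
  have hds : (Finset.univ.filter fun w => dsum W z w ≠ dsum W zt w) =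
      Finset.univ.filter fun w => dsum W (z + zt) w ≠ 0 := by
    apply Finset.filter_congr
    intro w _
    have hdd : dsum W (z + zt) w = dsum W z w + dsum W zt w := by
      unfold dsum
      simp [Finset.sum_add_distrib]
    rw [hdd, zmod2_add_ne]
  have hbW : ε < biasW W (dsum W (z + zt)) := by
    have hcard : Fintype.card {w // w ∈ W} = W.card := Fintype.card_coe W
    have hb : biasW W (dsum W (z + zt)) =
        |1 - 2 * (((Finset.univ.filter fun w => dsum W (z+zt) w ≠ 0).card : ℝ) / W.card)| := by
      unfold biasW
      rw [← hcard]
      exact bias_formula _ (by rw [hcard]; exact_mod_cast hNW)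
    rw [hb, ← hds]
    have hlt : ((Finset.univ.filter fun w => dsum W z w ≠ dsum W zt w).card : ℝ) / W.card
        < (1-ε)/2 := htri
    calc ε < 1 - 2 * (((Finset.univ.filter fun w => dsum W z w ≠ dsum W zt w).card : ℝ)
              / W.card) := by linarith
      _ ≤ |1 - 2 * (((Finset.univ.filter fun w => dsum W z w ≠ dsum W zt w).card : ℝ)
              / W.card)| := le_abs_self _
  have hbn : ¬ bias n (z + zt) ≤ 1/2 + ε₀/2 := fun h => absurd (hps _ h) (not_le.mpr hbW)
  apply hbn
  have hfe : (Finset.univ.filter fun i => (z + zt) i ≠ 0) =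
      Finset.univ.filter fun i => z i ≠ zt i := by
    apply Finset.filter_congr
    intro i _
    simpa using zmod2_add_ne (z i) (zt i)
  have hbias : bias n (z + zt) = |1 - 2 * ((m:ℝ) / n)| := by
    have hcn : Fintype.card (Fin n) = n := Fintype.card_fin n
    have hbf := bias_formula (z + zt) (by rw [hcn]; exact hn)
    rw [hcn, hfe] at hbf
    unfold bias
    rw [hbf]
  rw [hbias, abs_le]
  have hmle : (m:ℝ)/n ≤ (3 + ε₀)/4 := by
    have hh : ((n:ℝ) - m)/n = 1 - (m:ℝ)/n := by
      rw [sub_div, div_self hn'.ne']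
    rw [hh] at hc2
    linarith
  constructor <;> linarith
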